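/- arXiv:2002.09677 — 3 statements merged into one kernel-verified Lean document; each statement's English description precedes it below -/
import Mathlib

section
/- Let σ_1 ≥ σ_2 ≥ ... > 0 be a summable nonincreasing sequence of positive reals and define, for N ≥ 1 and m ≥ 1, ε_m = σ_m · p_N(σ^{¬m}) / p_N(σ), where p_N denotes the elementary symmetric sum of order N and σ^{¬m} is σ with the m-th entry removed. Then the sequence (ε_m)_{m≥1} is nonincreasing in m. -/
open scoped BigOperators

/-- Elementary symmetric sum of order `M` of a sequence. -/
noncomputable def esymm (M : ℕ) (lam : ℕ → ℝ) : ℝ :=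
  ∑' s : {s : Finset ℕ // s.card = M}, ∏ u ∈ s.1, lam u

open Function Finset

/-- The family of all finite products of a nonneg summable sequence is summable. -/
lemma prod_summable (lam : ℕ → ℝ) (h0 : ∀ n, 0 ≤ lam n) (hs : Summable lam) :
    Summable (fun s : Finset ℕ => ∏ u ∈ s, lam u) := by
  refine summable_of_sum_le (c := Real.exp (∑' n, lam n))
    (fun s => Finset.prod_nonneg fun u _ => h0 u) (fun T => ?_)
  set S : Finset ℕ := T.sup id with hS
  have hTsub : T ⊆ S.powerset := by
    intro s hsT
    exact Finset.mem_powerset.mpr (Finset.le_sup (f := id) hsT)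
  calc ∑ s ∈ T, ∏ u ∈ s, lam u
      ≤ ∑ s ∈ S.powerset, ∏ u ∈ s, lam u := by
        exact Finset.sum_le_sum_of_subset_of_nonneg hTsub
          (fun s _ _ => Finset.prod_nonneg fun u _ => h0 u)
    _ = ∏ u ∈ S, (lam u + 1) := by
        rw [Finset.prod_add]
        simp
    _ ≤ ∏ u ∈ S, Real.exp (lam u) := by
        refine Finset.prod_le_prod (fun u _ => by linarith [h0 u]) (fun u _ => Real.add_one_le_exp _)
    _ = Real.exp (∑ u ∈ S, lam u) := (Real.exp_sum S lam).symm
    _ ≤ Real.exp (∑' n, lam n) := by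
        exact Real.exp_le_exp.mpr (Summable.sum_le_tsum S (fun n _ => h0 n) hs)

/-- Indicator form of the product family. -/
noncomputable def esF (N : ℕ) (lam : ℕ → ℝ) : Finset ℕ → ℝ :=
  fun s => if s.card = N then ∏ u ∈ s, lam u else 0

lemma esF_eq_indicator (N : ℕ) (lam : ℕ → ℝ) :
    esF N lam = Set.indicator {s : Finset ℕ | s.card = N} (fun s => ∏ u ∈ s, lam u) := by
  funext s
  simp [esF, Set.indicator_apply, Set.mem_setOf_eq]

lemma esF_summable (N : ℕ) (lam : ℕ → ℝ) (h0 : ∀ n, 0 ≤ lam n) (hs : Summable lam) :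
    Summable (esF N lam) := by
  rw [esF_eq_indicator]
  exact (prod_summable lam h0 hs).indicator _

lemma esymm_eq_tsum_esF (N : ℕ) (lam : ℕ → ℝ) :
    esymm N lam = ∑' s : Finset ℕ, esF N lam s := by
  rw [esymm, esF_eq_indicator]
  exact tsum_subtype {s : Finset ℕ | s.card = N} (fun s => ∏ u ∈ s, lam u)

lemma esymm_nonneg (N : ℕ) (lam : ℕ → ℝ) (h0 : ∀ n, 0 ≤ lam n) : 0 ≤ esymm N lam :=
  tsum_nonneg (fun s => Finset.prod_nonneg fun u _ => h0 u)

/-- The equivalence between finsets containing `n` and finsets not containing `n`. -/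
noncomputable def eraseEquiv (n : ℕ) :
    {s : Finset ℕ // n ∈ s} ≃ {s : Finset ℕ // n ∉ s} where
  toFun s := ⟨s.1.erase n, Finset.notMem_erase n s.1⟩
  invFun t := ⟨insert n t.1, Finset.mem_insert_self n t.1⟩
  left_inv s := by
    ext : 1
    exact Finset.insert_erase s.2
  right_inv t := by
    ext : 1
    exact Finset.erase_insert t.2

/-- Key splitting identity. -/
lemma esymm_split (N : ℕ) (hN : 1 ≤ N) (lam : ℕ → ℝ) (h0 : ∀ n, 0 ≤ lam n)
    (hs : Summable lam) (n : ℕ) :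
    esymm N lam = lam n * esymm (N - 1) (update lam n 0) + esymm N (update lam n 0) := by
  have hupd0 : ∀ k, 0 ≤ update lam n 0 k := by
    intro k
    rcases eq_or_ne k n with rfl | h
    · simp
    · simp [Function.update_apply, h, h0 k]
  have hupds : Summable (update lam n 0) := hs.update n 0
  have hf : Summable (esF N lam) := esF_summable N lam h0 hs
  -- split the full sum over membership of `n`
  set A : Set (Finset ℕ) := {s : Finset ℕ | n ∈ s} with hA
  have hsplit : (∑' s : A, esF N lam s) + (∑' s : ↑Aᶜ, esF N lam s)
      = ∑' s : Finset ℕ, esF N lam s :=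
    Summable.tsum_add_tsum_compl (hf.subtype A) (hf.subtype Aᶜ)
  -- the complement part
  have hprod_upd : ∀ s : Finset ℕ, n ∉ s →
      (∏ u ∈ s, update lam n 0 u) = ∏ u ∈ s, lam u := by
    intro s hns
    refine Finset.prod_congr rfl (fun u hu => ?_)
    exact Function.update_of_ne (by rintro rfl; exact hns hu) 0 lam
  have hsupp : ∀ M : ℕ, Function.support (esF M (update lam n 0)) ⊆ Aᶜ := by
    intro M s hsup
    simp only [Set.mem_compl_iff, hA, Set.mem_setOf_eq]
    intro hns
    apply hsup
    simp only [esF]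
    split
    · exact Finset.prod_eq_zero hns (by simp)
    · rfl
  have hsupp' : ∀ M : ℕ, Function.support (esF M (update lam n 0))
      ⊆ {s : Finset ℕ | n ∉ s} := by
    intro M s hsup
    exact hsupp M hsup
  have hcompl : (∑' s : ↑Aᶜ, esF N lam s) = esymm N (update lam n 0) := by
    have e1 : (∑' s : ↑Aᶜ, esF N lam ↑s) = ∑' s : ↑Aᶜ, esF N (update lam n 0) ↑s := by
      refine tsum_congr (fun s => ?_)
      have hns : n ∉ (s : Finset ℕ) := s.2
      simp only [esF]
      split
      · exact (hprod_upd s.1 hns).symm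
      · rfl
    rw [e1, esymm_eq_tsum_esF]
    exact tsum_subtype_eq_of_support_subset (hsupp N)
  -- the part with n ∈ s, via the erase equivalence
  have hmem : (∑' s : A, esF N lam s) = lam n * esymm (N - 1) (update lam n 0) := by
    have he : (∑' s : A, esF N lam s)
        = ∑' t : {s : Finset ℕ // n ∉ s}, esF N lam ((eraseEquiv n).symm t).1 := by
      exact ((eraseEquiv n).symm.tsum_eq (fun s : {s : Finset ℕ // n ∈ s} => esF N lam s.1)).symm
    rw [he]
    have hterm : ∀ t : {s : Finset ℕ // n ∉ s},
        esF N lam ((eraseEquiv n).symm t).1 = lam n * esF (N - 1) (update lam n 0) t.1 := by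
      intro t
      have hnt : n ∉ t.1 := t.2
      have hins : ((eraseEquiv n).symm t).1 = insert n t.1 := rfl
      rw [hins]
      simp only [esF, Finset.card_insert_of_notMem hnt]
      have hcard : t.1.card + 1 = N ↔ t.1.card = N - 1 := by omega
      by_cases h : t.1.card = N - 1
      · rw [if_pos (hcard.mpr h), if_pos h, Finset.prod_insert hnt, hprod_upd t.1 hnt]
      · rw [if_neg (fun hc => h (hcard.mp hc)), if_neg h, mul_zero]
    calc (∑' t : {s : Finset ℕ // n ∉ s}, esF N lam ((eraseEquiv n).symm t).1)
        = ∑' t : {s : Finset ℕ // n ∉ s}, lam n * esF (N - 1) (update lam n 0) t.1 :=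
          tsum_congr hterm
      _ = lam n * ∑' t : {s : Finset ℕ // n ∉ s}, esF (N - 1) (update lam n 0) t.1 :=
          tsum_mul_left
      _ = lam n * ∑' s : Finset ℕ, esF (N - 1) (update lam n 0) s := by
          congr 1
          exact tsum_subtype_eq_of_support_subset (s := {s : Finset ℕ | n ∉ s}) (hsupp' (N - 1))
      _ = lam n * esymm (N - 1) (update lam n 0) := by rw [← esymm_eq_tsum_esF]
  rw [esymm_eq_tsum_esF, ← hsplit, hmem, hcompl]

/-- For a summable, nonincreasing, positive sequence `σ`, the sequence
`ε_m = σ_m p_N(σ^{¬m}) / p_N(σ)` is nonincreasing in `m`. -/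
theorem eps_antitone (σ : ℕ → ℝ) (hpos : ∀ m, 0 < σ m) (hmono : Antitone σ)
    (hsum : Summable σ) (N : ℕ) (hN : 1 ≤ N) :
    Antitone (fun m : ℕ => σ m * esymm N (Function.update σ m 0) / esymm N σ) := by
  have h0 : ∀ n, 0 ≤ σ n := fun n => (hpos n).le
  -- positivity of the denominator
  have hDpos : 0 < esymm N σ := by
    have hsub : Summable (fun s : {s : Finset ℕ // s.card = N} => ∏ u ∈ s.1, σ u) := by
      have := (prod_summable σ h0 hsum).subtype {s : Finset ℕ | s.card = N}
      exact this
    have hterm : (0:ℝ) < ∏ u ∈ (Finset.range N), σ u :=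
      Finset.prod_pos (fun u _ => hpos u)
    have hle := Summable.le_tsum hsub ⟨Finset.range N, Finset.card_range N⟩
      (fun j _ => Finset.prod_nonneg fun u _ => h0 u)
    exact lt_of_lt_of_le hterm hle
  refine antitone_nat_of_succ_le (fun m => ?_)
  -- the two splitting identities
  have hupd0 : ∀ k l, 0 ≤ update σ k 0 l := by
    intro k l
    rcases eq_or_ne l k with rfl | h
    · simp
    · simp [Function.update_apply, h, h0 l]
  set τ : ℕ → ℝ := update (update σ m 0) (m + 1) 0 with hτ
  have hne : m + 1 ≠ m := by omega
  have h1 : esymm N (update σ m 0)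
      = σ (m + 1) * esymm (N - 1) τ + esymm N τ := by
    have := esymm_split N hN (update σ m 0) (hupd0 m) (hsum.update m 0) (m + 1)
    rwa [Function.update_of_ne hne 0 σ] at this
  have h2 : esymm N (update σ (m + 1) 0)
      = σ m * esymm (N - 1) τ + esymm N τ := by
    have := esymm_split N hN (update σ (m + 1) 0) (hupd0 (m + 1)) (hsum.update (m + 1) 0) m
    rw [Function.update_of_ne hne.symm 0 σ] at this
    rw [Function.update_comm hne (0:ℝ) (0:ℝ) σ, ← hτ] at this
    exact this
  have hτ0 : ∀ k, 0 ≤ τ k := by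
    intro k
    rcases eq_or_ne k (m + 1) with rfl | h
    · simp [hτ]
    · rw [hτ, Function.update_of_ne h]
      exact hupd0 m k
  have hP : 0 ≤ esymm (N - 1) τ := esymm_nonneg _ _ hτ0
  have hQ : 0 ≤ esymm N τ := esymm_nonneg _ _ hτ0
  have hmm : σ (m + 1) ≤ σ m := hmono (Nat.le_succ m)
  have key : σ (m + 1) * esymm N (update σ (m + 1) 0)
      ≤ σ m * esymm N (update σ m 0) := by
    rw [h1, h2]
    nlinarith [mul_nonneg (sub_nonneg.mpr hmm) hQ, mul_nonneg (sub_nonneg.mpr hmm) hP,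
      hpos m, hpos (m + 1)]
  gcongr
end

section
/- Let M ≥ 1, L ≥ M+1, and λ_1 ≥ λ_2 ≥ ... ≥ λ_L > 0. Then for every M' ≤ M, the ratio of consecutive elementary symmetric polynomials satisfies p_{M+1}(λ)/p_M(λ) ≤ (Σ_{m ≥ M'+1} λ_m) / (M + 1 − M'). -/
open scoped BigOperators

/-- Guruswami–Sinop inequality (Theorem 3.1 of Guruswami–Sinop 2012): for nonincreasing
positive `λ_1 ≥ ... ≥ λ_L > 0` (indexed here by `Fin L`, `0`-based) and `M' ≤ M`,
`p_{M+1}(λ)/p_M(λ) ≤ (Σ_{m ≥ M'+1} λ_m)/(M+1−M')`, where `p_M` is the elementary symmetric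
polynomial of order `M` and the sum runs over the `1`-based indices `m ≥ M'+1`, i.e. the
`0`-based indices `i ≥ M'`. -/
theorem guruswami_sinop (M L : ℕ) (hM : 1 ≤ M) (hL : M + 1 ≤ L) (lam : Fin L → ℝ)
    (hmono : Antitone lam) (hpos : ∀ i, 0 < lam i) (M' : ℕ) (hM' : M' ≤ M) :
    (∑ s ∈ Finset.powersetCard (M + 1) (Finset.univ : Finset (Fin L)), ∏ u ∈ s, lam u) /
        (∑ s ∈ Finset.powersetCard M (Finset.univ : Finset (Fin L)), ∏ u ∈ s, lam u) ≤
      (∑ i ∈ Finset.univ.filter (fun i : Fin L => M' ≤ (i : ℕ)), lam i) /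
        ((M : ℝ) + 1 - M') := by
  classical
  have hlamnn : ∀ i, 0 ≤ lam i := fun i => (hpos i).le
  have hprodpos : ∀ S : Finset (Fin L), 0 < ∏ u ∈ S, lam u :=
    fun S => Finset.prod_pos (fun i _ => hpos i)
  set P : Fin L → Prop := fun i => M' ≤ (i : ℕ) with hP
  set F : Finset (Fin L) := Finset.univ.filter P with hFdef
  set B : ℝ := ∑ s ∈ Finset.powersetCard M (Finset.univ : Finset (Fin L)), ∏ u ∈ s, lam u
    with hBdef
  have hBpos : 0 < B := by
    apply Finset.sum_pos (fun s _ => hprodpos s)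
    refine Finset.powersetCard_nonempty.2 ?_
    simpa using le_trans (Nat.le_succ M) hL
  have hc : (0:ℝ) < (M:ℝ) + 1 - M' := by
    have : (M':ℝ) ≤ M := by exact_mod_cast hM'
    linarith
  rw [div_le_div_iff₀ hBpos hc]
  -- Step 1: pointwise bound for each (M+1)-set S
  have step1 : ∀ S ∈ Finset.powersetCard (M + 1) (Finset.univ : Finset (Fin L)),
      (∏ u ∈ S, lam u) * ((M:ℝ) + 1 - M') ≤ ∑ u ∈ S.filter P, ∏ v ∈ S, lam v := by
    intro S hS
    rw [Finset.mem_powersetCard] at hS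
    have hcard : (S.filter P).card + (S.filter (fun i => ¬ P i)).card = M + 1 := by
      rw [Finset.card_filter_add_card_filter_not, hS.2]
    have hneg : (S.filter (fun i => ¬ P i)).card ≤ M' := by
      have := Finset.card_le_card_of_injOn (f := Fin.val)
        (s := S.filter (fun i => ¬ P i)) (t := Finset.range M')
        (by intro a ha
            simp only [Finset.mem_coe, Finset.mem_filter, hP, not_le] at ha
            simpa using ha.2)
        (fun a _ b _ h => Fin.val_injective h)
      simpa using this
    have hge : M + 1 ≤ (S.filter P).card + M' := by omega
    have hgeR : (M:ℝ) + 1 - M' ≤ ((S.filter P).card : ℝ) := by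
      have : ((M:ℕ):ℝ) + 1 ≤ ((S.filter P).card : ℝ) + (M':ℝ) := by
        exact_mod_cast hge
      linarith
    rw [Finset.sum_const, nsmul_eq_mul, mul_comm (((S.filter P).card : ℝ))]
    exact mul_le_mul_of_nonneg_left hgeR (hprodpos S).le
  -- Step 2: per element, sum over (M+1)-sets containing u
  have step2 : ∀ u : Fin L,
      (∑ S ∈ (Finset.powersetCard (M + 1) (Finset.univ : Finset (Fin L))).filter
          (fun S => u ∈ S), ∏ v ∈ S, lam v)
        = lam u * ∑ T ∈ Finset.powersetCard M (Finset.univ.erase u), ∏ v ∈ T, lam v := by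
    intro u
    rw [Finset.mul_sum]
    refine Finset.sum_nbij' (i := fun S => S.erase u) (j := fun T => insert u T)
      ?_ ?_ ?_ ?_ ?_
    · intro S hS
      simp only [Finset.mem_filter, Finset.mem_powersetCard] at hS
      rw [Finset.mem_powersetCard]
      constructor
      · intro x hx
        rw [Finset.mem_erase] at hx ⊢
        exact ⟨hx.1, Finset.mem_univ x⟩
      · rw [Finset.card_erase_of_mem hS.2, hS.1.2]
        omega
    · intro T hT
      rw [Finset.mem_powersetCard] at hT
      have hu : u ∉ T := fun h => (Finset.mem_erase.1 (hT.1 h)).1 rfl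
      simp only [Finset.mem_filter, Finset.mem_powersetCard]
      refine ⟨⟨Finset.subset_univ _, ?_⟩, Finset.mem_insert_self u T⟩
      rw [Finset.card_insert_of_notMem hu, hT.2]
    · intro S hS
      simp only [Finset.mem_filter] at hS
      exact Finset.insert_erase hS.2
    · intro T hT
      rw [Finset.mem_powersetCard] at hT
      have hu : u ∉ T := fun h => (Finset.mem_erase.1 (hT.1 h)).1 rfl
      exact Finset.erase_insert hu
    · intro S hS
      simp only [Finset.mem_filter] at hS
      exact (Finset.mul_prod_erase S lam hS.2).symm
  -- Step 3: the erased-universe sum is at most B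
  have step3 : ∀ u : Fin L,
      (∑ T ∈ Finset.powersetCard M (Finset.univ.erase u), ∏ v ∈ T, lam v) ≤ B := by
    intro u
    apply Finset.sum_le_sum_of_subset_of_nonneg
    · exact Finset.powersetCard_mono (Finset.erase_subset u Finset.univ)
    · intro T _ _
      exact (hprodpos T).le
  calc (∑ s ∈ Finset.powersetCard (M + 1) (Finset.univ : Finset (Fin L)), ∏ u ∈ s, lam u)
        * ((M:ℝ) + 1 - M')
      = ∑ S ∈ Finset.powersetCard (M + 1) (Finset.univ : Finset (Fin L)),
          (∏ u ∈ S, lam u) * ((M:ℝ) + 1 - M') := by rw [Finset.sum_mul]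
    _ ≤ ∑ S ∈ Finset.powersetCard (M + 1) (Finset.univ : Finset (Fin L)),
          ∑ u ∈ S.filter P, ∏ v ∈ S, lam v := Finset.sum_le_sum step1
    _ = ∑ S ∈ Finset.powersetCard (M + 1) (Finset.univ : Finset (Fin L)),
          ∑ u ∈ F, if u ∈ S then ∏ v ∈ S, lam v else 0 := by
        refine Finset.sum_congr rfl (fun S _ => ?_)
        rw [← Finset.sum_filter]
        refine Finset.sum_congr ?_ (fun _ _ => rfl)
        ext x
        simp [hFdef, Finset.mem_filter, and_comm]
    _ = ∑ u ∈ F, ∑ S ∈ Finset.powersetCard (M + 1) (Finset.univ : Finset (Fin L)),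
          if u ∈ S then ∏ v ∈ S, lam v else 0 := Finset.sum_comm
    _ = ∑ u ∈ F, ∑ S ∈ (Finset.powersetCard (M + 1) (Finset.univ : Finset (Fin L))).filter
          (fun S => u ∈ S), ∏ v ∈ S, lam v := by
        refine Finset.sum_congr rfl (fun u _ => ?_)
        rw [Finset.sum_filter]
    _ = ∑ u ∈ F, lam u * ∑ T ∈ Finset.powersetCard M (Finset.univ.erase u), ∏ v ∈ T, lam v := by
        refine Finset.sum_congr rfl (fun u _ => ?_)
        exact step2 u
    _ ≤ ∑ u ∈ F, lam u * B := by
        refine Finset.sum_le_sum (fun u _ => ?_)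
        exact mul_le_mul_of_nonneg_left (step3 u) (hlamnn u)
    _ = (∑ i ∈ F, lam i) * B := by rw [Finset.sum_mul]
end

section
/- Let (λ_m)_{m≥1} be a nonincreasing summable sequence of strictly positive reals, and M ≥ 1. Then for every M' ≤ M, p_{M+1}(λ)/p_M(λ) ≤ (Σ_{m≥M'+1} λ_m)/(M+1−M'), where p_M(λ) is the elementary symmetric sum of order M over all M-element subsets of ℕ*. -/
set_option maxHeartbeats 1000000


open scoped BigOperators

lemma esymm_summable (lam : ℕ → ℝ) (hpos : ∀ m, 0 < lam m) (hsum : Summable lam) :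
    ∀ M : ℕ, Summable (fun s : {s : Finset ℕ // s.card = M} => ∏ u ∈ s.1, lam u) := by
  intro M
  induction M with
  | zero =>
    haveI : Subsingleton {s : Finset ℕ // s.card = 0} :=
      ⟨fun a b => Subtype.ext (by
        rw [Finset.card_eq_zero.mp a.2, Finset.card_eq_zero.mp b.2])⟩
    exact Summable.of_finite
  | succ M ih =>
    have hg : Summable (fun p : {t : Finset ℕ // t.card = M} × ℕ =>
        (∏ u ∈ p.1.1, lam u) * lam p.2) :=
      ih.mul_of_nonneg hsum (fun t => Finset.prod_nonneg fun u _ => (hpos u).le)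
        (fun u => (hpos u).le)
    have hne : ∀ s : {s : Finset ℕ // s.card = M + 1}, s.1.Nonempty := fun s =>
      Finset.card_pos.mp (by rw [s.2]; omega)
    have hcard : ∀ s : {s : Finset ℕ // s.card = M + 1},
        (s.1.erase (s.1.max' (hne s))).card = M := by
      intro s
      rw [Finset.card_erase_of_mem (s.1.max'_mem _), s.2]
      omega
    set i : {s : Finset ℕ // s.card = M + 1} → {t : Finset ℕ // t.card = M} × ℕ :=
      fun s => (⟨s.1.erase (s.1.max' (hne s)), hcard s⟩, s.1.max' (hne s)) with hi_def
    have hinj : Function.Injective i := by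
      intro a b hab
      have h2 : a.1.max' (hne a) = b.1.max' (hne b) := congrArg Prod.snd hab
      have h1 : a.1.erase (a.1.max' (hne a)) = b.1.erase (b.1.max' (hne b)) :=
        congrArg (fun p => (p.1 : Finset ℕ)) hab
      apply Subtype.ext
      rw [← Finset.insert_erase (a.1.max'_mem (hne a)),
        ← Finset.insert_erase (b.1.max'_mem (hne b)), h1, h2]
    have heq : (fun s : {s : Finset ℕ // s.card = M + 1} => ∏ u ∈ s.1, lam u)
        = (fun p : {t : Finset ℕ // t.card = M} × ℕ => (∏ u ∈ p.1.1, lam u) * lam p.2) ∘ i := by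
      funext s
      simp only [Function.comp, hi_def]
      exact (Finset.prod_erase_mul _ _ (s.1.max'_mem (hne s))).symm
    rw [heq]
    exact hg.comp_injective hinj

lemma esymm_pos (lam : ℕ → ℝ) (hpos : ∀ m, 0 < lam m) (hsum : Summable lam) (M : ℕ) :
    0 < esymm M lam :=
  Summable.tsum_pos (esymm_summable lam hpos hsum M)
    (fun s => Finset.prod_nonneg fun u _ => (hpos u).le)
    ⟨Finset.range M, Finset.card_range M⟩
    (Finset.prod_pos fun u _ => hpos u)

/-- Guruswami–Sinop inequality for infinite summable sequences: for a nonincreasing summable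
sequence of strictly positive reals (indexed from `0`, so the paper's `λ_m` is `lam (m-1)`),
`M ≥ 1` and `M' ≤ M`, `p_{M+1}(λ)/p_M(λ) ≤ (Σ_{m ≥ M'+1} λ_m)/(M+1−M')`; the tail sum over
`1`-based indices `m ≥ M'+1` is `∑' i, lam (M' + i)`. -/
theorem guruswami_sinop_infinite (lam : ℕ → ℝ) (hmono : Antitone lam)
    (hpos : ∀ m, 0 < lam m) (hsum : Summable lam) (M : ℕ) (hM : 1 ≤ M)
    (M' : ℕ) (hM' : M' ≤ M) :
    esymm (M + 1) lam / esymm M lam ≤ (∑' i : ℕ, lam (M' + i)) / ((M : ℝ) + 1 - M') := by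
  classical
  have hnn : ∀ u, 0 ≤ lam u := fun u => (hpos u).le
  have hprodnn : ∀ s : Finset ℕ, 0 ≤ ∏ u ∈ s, lam u := fun s =>
    Finset.prod_nonneg fun u _ => hnn u
  have hSA : Summable (fun s : {s : Finset ℕ // s.card = M + 1} => ∏ u ∈ s.1, lam u) :=
    esymm_summable lam hpos hsum (M + 1)
  have hSB : Summable (fun t : {t : Finset ℕ // t.card = M} => ∏ u ∈ t.1, lam u) :=
    esymm_summable lam hpos hsum M
  -- the tail sum over the subtype
  have htailU : Summable (fun u : {u : ℕ // M' ≤ u} => lam u.1) := hsum.subtype _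
  have htail_eq : (∑' i : ℕ, lam (M' + i)) = ∑' u : {u : ℕ // M' ≤ u}, lam u.1 :=
    Equiv.tsum_eq
      { toFun := fun i => ⟨M' + i, Nat.le_add_right _ _⟩
        invFun := fun u => u.1 - M'
        left_inv := fun i => by simp
        right_inv := fun u => Subtype.ext (by have := u.2; simp; omega) }
      (fun u : {u : ℕ // M' ≤ u} => lam u.1)
  -- the product function
  have hg : Summable (fun p : {t : Finset ℕ // t.card = M} × {u : ℕ // M' ≤ u} =>
      (∏ u ∈ p.1.1, lam u) * lam p.2.1) :=
    hSB.mul_of_nonneg htailU (fun t => hprodnn _) (fun u => hnn _)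
  have hg_tsum : ∑' p : {t : Finset ℕ // t.card = M} × {u : ℕ // M' ≤ u},
      (∏ u ∈ p.1.1, lam u) * lam p.2.1
      = esymm M lam * ∑' u : {u : ℕ // M' ≤ u}, lam u.1 :=
    (Summable.tsum_mul_tsum hSB htailU hg).symm
  -- the sigma type of pairs (s, u) with u ∈ s, M' ≤ u
  set S := Σ s : {s : Finset ℕ // s.card = M + 1},
    {u : ℕ // u ∈ s.1.filter (fun u => M' ≤ u)} with hS_def
  set F : S → ℝ := fun x => ∏ u ∈ x.1.1, lam u with hF_def
  have hmem : ∀ x : S, x.2.1 ∈ x.1.1 := fun x => (Finset.mem_filter.mp x.2.2).1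
  have hle : ∀ x : S, M' ≤ x.2.1 := fun x => (Finset.mem_filter.mp x.2.2).2
  set i : S → {t : Finset ℕ // t.card = M} × {u : ℕ // M' ≤ u} :=
    fun x => (⟨x.1.1.erase x.2.1, by
        rw [Finset.card_erase_of_mem (hmem x), x.1.2]; omega⟩, ⟨x.2.1, hle x⟩) with hi_def
  have hinj : Function.Injective i := by
    rintro ⟨⟨s, hs⟩, ⟨u, hu⟩⟩ ⟨⟨t, ht⟩, ⟨v, hv⟩⟩ hab
    have h2 : u = v := congrArg (fun p => (p.2.1 : ℕ)) hab
    have h1 : s.erase u = t.erase v := congrArg (fun p => (p.1.1 : Finset ℕ)) hab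
    have hst : s = t := by
      have hu' : u ∈ s := (Finset.mem_filter.mp hu).1
      have hv' : v ∈ t := (Finset.mem_filter.mp hv).1
      rw [← Finset.insert_erase hu', ← Finset.insert_erase hv', h1, h2]
    subst hst
    have huv : u = v := h2
    subst huv
    rfl
  have hFg : F = (fun p : {t : Finset ℕ // t.card = M} × {u : ℕ // M' ≤ u} =>
      (∏ u ∈ p.1.1, lam u) * lam p.2.1) ∘ i := by
    funext x
    simp only [hF_def, hi_def, Function.comp]
    exact (Finset.prod_erase_mul _ _ (hmem x)).symm
  have hF : Summable F := by rw [hFg]; exact hg.comp_injective hinj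
  have hkey : ∑' x : S, F x ≤ ∑' p : {t : Finset ℕ // t.card = M} × {u : ℕ // M' ≤ u},
      (∏ u ∈ p.1.1, lam u) * lam p.2.1 :=
    Summable.tsum_le_tsum_of_inj i hinj (fun c _ => mul_nonneg (hprodnn _) (hnn _))
      (fun x => le_of_eq (congrFun hFg x)) hF hg
  -- count function
  set cnt : {s : Finset ℕ // s.card = M + 1} → ℕ :=
    fun s => (s.1.filter (fun u => M' ≤ u)).card with hcnt_def
  have hcnt_ge : ∀ s : {s : Finset ℕ // s.card = M + 1}, M + 1 ≤ cnt s + M' := by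
    intro s
    have hsplit : (s.1.filter (fun u => M' ≤ u)).card
        + (s.1.filter (fun u => ¬ M' ≤ u)).card = s.1.card :=
      Finset.card_filter_add_card_filter_not _
    have hsub : s.1.filter (fun u => ¬ M' ≤ u) ⊆ Finset.range M' := by
      intro u hu
      rw [Finset.mem_range]
      have := (Finset.mem_filter.mp hu).2
      omega
    have hle2 : (s.1.filter (fun u => ¬ M' ≤ u)).card ≤ M' := by
      have := Finset.card_le_card hsub
      simpa using this
    rw [s.2] at hsplit
    simp only [hcnt_def]
    omega
  have hcnt_le : ∀ s : {s : Finset ℕ // s.card = M + 1}, cnt s ≤ M + 1 := by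
    intro s
    have := Finset.card_filter_le s.1 (fun u => M' ≤ u)
    rw [s.2] at this
    exact this
  -- summability of the counted sum
  have hSc : Summable (fun s : {s : Finset ℕ // s.card = M + 1} =>
      (cnt s : ℝ) * ∏ u ∈ s.1, lam u) := by
    apply Summable.of_nonneg_of_le
      (fun s => mul_nonneg (Nat.cast_nonneg _) (hprodnn _))
      (fun s => ?_) (hSA.mul_left ((M : ℝ) + 1))
    have h1 : (cnt s : ℝ) ≤ (M : ℝ) + 1 := by
      have := hcnt_le s; push_cast; exact_mod_cast this
    exact mul_le_mul_of_nonneg_right h1 (hprodnn _)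
  -- the sigma tsum equals the counted sum
  have hsigma : ∑' x : S, F x = ∑' s : {s : Finset ℕ // s.card = M + 1},
      (cnt s : ℝ) * ∏ u ∈ s.1, lam u := by
    rw [Summable.tsum_sigma' (fun s => Summable.of_finite) hF]
    apply tsum_congr
    intro s
    rw [tsum_fintype]
    simp only [hF_def, Finset.sum_const, nsmul_eq_mul, hcnt_def]
    congr 1
    exact_mod_cast congrArg (Nat.cast (R := ℝ)) (Fintype.card_coe _)
  -- main inequality
  have hdpos : (0 : ℝ) < (M : ℝ) + 1 - M' := by
    have : (M' : ℝ) ≤ M := by exact_mod_cast hM'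
    linarith
  have hBpos : 0 < esymm M lam := esymm_pos lam hpos hsum M
  rw [div_le_div_iff₀ hBpos hdpos]
  have hmain : ((M : ℝ) + 1 - M') * esymm (M + 1) lam
      ≤ (∑' i : ℕ, lam (M' + i)) * esymm M lam := by
    calc ((M : ℝ) + 1 - M') * esymm (M + 1) lam
        = ∑' s : {s : Finset ℕ // s.card = M + 1},
            ((M : ℝ) + 1 - M') * ∏ u ∈ s.1, lam u := tsum_mul_left.symm
      _ ≤ ∑' s : {s : Finset ℕ // s.card = M + 1},
            (cnt s : ℝ) * ∏ u ∈ s.1, lam u := by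
          apply Summable.tsum_le_tsum _ (hSA.mul_left _) hSc
          intro s
          apply mul_le_mul_of_nonneg_right _ (hprodnn _)
          have := hcnt_ge s
          have h1 : ((M : ℕ) : ℝ) + 1 ≤ (cnt s : ℝ) + M' := by exact_mod_cast this
          linarith
      _ = ∑' x : S, F x := hsigma.symm
      _ ≤ ∑' p : {t : Finset ℕ // t.card = M} × {u : ℕ // M' ≤ u},
            (∏ u ∈ p.1.1, lam u) * lam p.2.1 := hkey
      _ = esymm M lam * ∑' u : {u : ℕ // M' ≤ u}, lam u.1 := hg_tsum
      _ = (∑' i : ℕ, lam (M' + i)) * esymm M lam := by rw [htail_eq]; ring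
  linarith [hmain]
end
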